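/- For all positive integers m and n, the sum over divisors a of m and b of n of gcd(a,b) equals the sum over common divisors u of gcd(m,n) of φ(u)·τ(m/u)·τ(n/u), where φ is Euler's totient function and τ is the number-of-divisors function. -/

import Mathlib

open Finset

lemma card_filter_dvd (m u : ℕ) (hm : m ≠ 0) (hu : u ∣ m) :
    ((m.divisors).filter (fun a => u ∣ a)).card = (m / u).divisors.card := by
  have hu0 : u ≠ 0 := by rintro rfl; rw [Nat.zero_dvd] at hu; exact hm hu
  have hmu : m / u ≠ 0 := Nat.div_ne_zero_iff.mpr ⟨hu0, Nat.le_of_dvd (Nat.pos_of_ne_zero hm) hu⟩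
  apply Finset.card_bij' (fun a _ => a / u) (fun c _ => c * u)
  · intro a ha
    simp only [mem_filter, Nat.mem_divisors] at ha
    obtain ⟨⟨ham, _⟩, hua⟩ := ha
    refine Nat.mem_divisors.mpr ⟨(Nat.dvd_div_iff_mul_dvd hu).mpr ?_, hmu⟩
    rwa [Nat.mul_div_cancel' hua]
  · intro c hc
    simp only [Nat.mem_divisors] at hc
    refine mem_filter.mpr ⟨Nat.mem_divisors.mpr ⟨?_, hm⟩, Dvd.intro_left c rfl⟩
    calc c * u ∣ (m / u) * u := mul_dvd_mul_right hc.1 u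
    _ = m := Nat.div_mul_cancel hu
  · intro a ha
    simp only [mem_filter] at ha
    exact Nat.div_mul_cancel ha.2
  · intro c _
    rw [Nat.mul_div_assoc c dvd_rfl, Nat.div_self (Nat.pos_of_ne_zero hu0), mul_one]

theorem gcd_divisor_sum_eq (m n : ℕ) (hm : 0 < m) (hn : 0 < n) :
    ∑ a ∈ m.divisors, ∑ b ∈ n.divisors, Nat.gcd a b =
      ∑ u ∈ (Nat.gcd m n).divisors,
        Nat.totient u * (m / u).divisors.card * (n / u).divisors.card := by
  have hg : Nat.gcd m n ≠ 0 := Nat.gcd_ne_zero_left hm.ne'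
  have step : ∀ a ∈ m.divisors, ∀ b ∈ n.divisors,
      Nat.gcd a b = ∑ u ∈ (Nat.gcd m n).divisors,
        if u ∣ a ∧ u ∣ b then Nat.totient u else 0 := by
    intro a ha b hb
    rw [Nat.mem_divisors] at ha hb
    have hab : Nat.gcd a b ≠ 0 := Nat.gcd_ne_zero_left (by
      rintro rfl; exact ha.2 (Nat.zero_dvd.mp ha.1))
    conv_lhs => rw [← Nat.sum_totient (Nat.gcd a b)]
    rw [← Finset.sum_filter]
    congr 1
    ext u
    simp only [Nat.mem_divisors, mem_filter, Nat.dvd_gcd_iff]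
    constructor
    · rintro ⟨⟨h1, h2⟩, _⟩
      exact ⟨⟨⟨h1.trans ha.1, h2.trans hb.1⟩, hg⟩, h1, h2⟩
    · rintro ⟨_, h1, h2⟩
      exact ⟨⟨h1, h2⟩, hab⟩
  calc ∑ a ∈ m.divisors, ∑ b ∈ n.divisors, Nat.gcd a b
      = ∑ a ∈ m.divisors, ∑ b ∈ n.divisors, ∑ u ∈ (Nat.gcd m n).divisors,
          (if u ∣ a then (1:ℕ) else 0) * (if u ∣ b then (1:ℕ) else 0) * Nat.totient u := by
        refine Finset.sum_congr rfl fun a ha => Finset.sum_congr rfl fun b hb => ?_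
        rw [step a ha b hb]
        refine Finset.sum_congr rfl fun u _ => ?_
        by_cases h1 : u ∣ a <;> by_cases h2 : u ∣ b <;> simp [h1, h2]
    _ = ∑ u ∈ (Nat.gcd m n).divisors, (∑ a ∈ m.divisors, if u ∣ a then (1:ℕ) else 0) *
          (∑ b ∈ n.divisors, if u ∣ b then (1:ℕ) else 0) * Nat.totient u := by
        rw [Finset.sum_congr rfl fun a (_ : a ∈ m.divisors) => Finset.sum_comm, Finset.sum_comm]
        refine Finset.sum_congr rfl fun u _ => ?_
        simp only [← Finset.sum_mul, ← Finset.mul_sum]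
    _ = ∑ u ∈ (Nat.gcd m n).divisors,
          Nat.totient u * (m / u).divisors.card * (n / u).divisors.card := by
        refine Finset.sum_congr rfl fun u hu => ?_
        rw [Nat.mem_divisors] at hu
        rw [Finset.sum_boole, Finset.sum_boole]
        push_cast
        rw [card_filter_dvd m u hm.ne' (hu.1.trans (Nat.gcd_dvd_left m n)),
            card_filter_dvd n u hn.ne' (hu.1.trans (Nat.gcd_dvd_right m n))]
        ring
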